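/- (Spinor Frenet equation) Let T, N, B : ℝ → ℝ³ be differentiable unit vector fields along a unit-speed curve satisfying the Frenet equations dT/ds = κN, dN/ds = −κT + τB, dB/ds = −τN for differentiable functions κ, τ : ℝ → ℝ. Let ψ : ℝ → ℂ² be a differentiable spinor with ψ̄ᵗψ = 1 representing the triad {N, B, T}, i.e., N(s) + iB(s) = ψ(s)ᵗσψ(s) and T(s) = −ψ̂(s)ᵗσψ(s) for all s. Then ψ satisfies the single spinor equation dψ/ds = (1/2)(−iτψ + κψ̂). -/

import Mathlib

open Matrix Complex

/-- The first Cartan spinor matrix σ₁ = [[1,0],[0,−1]]. -/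
noncomputable def sigma1 : Matrix (Fin 2) (Fin 2) ℂ := !![1, 0; 0, -1]

/-- The second Cartan spinor matrix σ₂ = [[i,0],[0,i]]. -/
noncomputable def sigma2 : Matrix (Fin 2) (Fin 2) ℂ := !![Complex.I, 0; 0, Complex.I]

/-- The third Cartan spinor matrix σ₃ = [[0,−1],[−1,0]]. -/
noncomputable def sigma3 : Matrix (Fin 2) (Fin 2) ℂ := !![0, -1; -1, 0]

/-- For spinors φ, ψ ∈ ℂ², the vector φᵗσψ ∈ ℂ³ whose j-th component is φᵗσⱼψ. -/
noncomputable def spinorBilin (φ ψ : Fin 2 → ℂ) : Fin 3 → ℂ :=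
  ![φ ⬝ᵥ sigma1.mulVec ψ, φ ⬝ᵥ sigma2.mulVec ψ, φ ⬝ᵥ sigma3.mulVec ψ]

/-- The mate (conjugate) of a spinor ψ: ψ̂ = (−ψ̄₂, ψ̄₁). -/
noncomputable def mate (ψ : Fin 2 → ℂ) : Fin 2 → ℂ :=
  ![-(starRingEnd ℂ) (ψ 1), (starRingEnd ℂ) (ψ 0)]

/-- **Spinor Frenet equation.** If the unit vector fields T, N, B satisfy the Frenet
equations with curvature κ and torsion τ, and the differentiable spinor ψ with
ψ̄ᵗψ = 1 represents the triad {N, B, T} (i.e. N + iB = ψᵗσψ, T = −ψ̂ᵗσψ), then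
dψ/ds = (1/2)(−iτψ + κψ̂). -/
theorem spinor_frenet_equation
    (T N B : ℝ → Fin 3 → ℝ) (κ τ : ℝ → ℝ)
    (hκ : Differentiable ℝ κ) (hτ : Differentiable ℝ τ)
    (hTunit : ∀ s, ∑ j, T s j ^ 2 = 1)
    (hNunit : ∀ s, ∑ j, N s j ^ 2 = 1)
    (hBunit : ∀ s, ∑ j, B s j ^ 2 = 1)
    (hT : ∀ (s : ℝ) (j : Fin 3), HasDerivAt (fun t => T t j) (κ s * N s j) s)
    (hN : ∀ (s : ℝ) (j : Fin 3),
      HasDerivAt (fun t => N t j) (-(κ s) * T s j + τ s * B s j) s)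
    (hB : ∀ (s : ℝ) (j : Fin 3), HasDerivAt (fun t => B t j) (-(τ s) * N s j) s)
    (ψ : ℝ → Fin 2 → ℂ)
    (hψdiff : ∀ k : Fin 2, Differentiable ℝ fun t => ψ t k)
    (hψunit : ∀ s, (starRingEnd ℂ) (ψ s 0) * ψ s 0 + (starRingEnd ℂ) (ψ s 1) * ψ s 1 = 1)
    (hNB : ∀ (s : ℝ) (j : Fin 3),
      (N s j : ℂ) + Complex.I * (B s j : ℂ) = spinorBilin (ψ s) (ψ s) j)
    (hTrep : ∀ (s : ℝ) (j : Fin 3), (T s j : ℂ) = -(spinorBilin (mate (ψ s)) (ψ s) j)) :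
    ∀ (s : ℝ) (k : Fin 2),
      HasDerivAt (fun t => ψ t k)
        ((1 / 2) * (-Complex.I * (τ s : ℂ) * ψ s k + (κ s : ℂ) * mate (ψ s) k)) s := by
  intro s k
  obtain ⟨D0, h0⟩ : ∃ d, HasDerivAt (fun t => ψ t 0) d s := ⟨_, ((hψdiff 0) s).hasDerivAt⟩
  obtain ⟨D1, h1⟩ : ∃ d, HasDerivAt (fun t => ψ t 1) d s := ⟨_, ((hψdiff 1) s).hasDerivAt⟩
  have hI2 : Complex.I * Complex.I = -1 := Complex.I_mul_I
  -- cleaned representation identities at s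
  have hT0 : (T s 0 : ℂ) = (starRingEnd ℂ) (ψ s 1) * (ψ s 0) + (starRingEnd ℂ) (ψ s 0) * (ψ s 1) := by
    rw [hTrep s 0]
    simp [spinorBilin, sigma1, mate, dotProduct, mulVec, Fin.sum_univ_two]
    ring
  have hT1 : (T s 1 : ℂ) =
      Complex.I * ((starRingEnd ℂ) (ψ s 1) * (ψ s 0) - (starRingEnd ℂ) (ψ s 0) * (ψ s 1)) := by
    rw [hTrep s 1]
    simp [spinorBilin, sigma2, mate, dotProduct, mulVec, Fin.sum_univ_two]
    ring
  have hT2 : (T s 2 : ℂ) = (starRingEnd ℂ) (ψ s 0) * (ψ s 0) - (starRingEnd ℂ) (ψ s 1) * (ψ s 1) := by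
    rw [hTrep s 2]
    simp [spinorBilin, sigma3, mate, dotProduct, mulVec, Fin.sum_univ_two]
    ring
  have hn0 : (N s 0 : ℂ) + Complex.I * (B s 0 : ℂ) = (ψ s 0) * (ψ s 0) - (ψ s 1) * (ψ s 1) := by
    rw [hNB s 0]
    simp [spinorBilin, sigma1, dotProduct, mulVec, Fin.sum_univ_two]
    ring
  have hn1 : (N s 1 : ℂ) + Complex.I * (B s 1 : ℂ) = Complex.I * ((ψ s 0) * (ψ s 0) + (ψ s 1) * (ψ s 1)) := by
    rw [hNB s 1]
    simp [spinorBilin, sigma2, dotProduct, mulVec, Fin.sum_univ_two]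
    ring
  have hn2 : (N s 2 : ℂ) + Complex.I * (B s 2 : ℂ) = -((ψ s 0) * (ψ s 1) + (ψ s 1) * (ψ s 0)) := by
    rw [hNB s 2]
    simp [spinorBilin, sigma3, dotProduct, mulVec, Fin.sum_univ_two]
    ring
  -- derivative identities for each coordinate
  have L0 : HasDerivAt (fun t => ((N t 0 : ℂ) + Complex.I * (B t 0 : ℂ)))
      (((-(κ s) * T s 0 + τ s * B s 0 : ℝ) : ℂ) + Complex.I * ((-(τ s) * N s 0 : ℝ) : ℂ)) s :=
    ((hN s 0).ofReal_comp).add ((hB s 0).ofReal_comp.const_mul Complex.I)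
  have L1 : HasDerivAt (fun t => ((N t 1 : ℂ) + Complex.I * (B t 1 : ℂ)))
      (((-(κ s) * T s 1 + τ s * B s 1 : ℝ) : ℂ) + Complex.I * ((-(τ s) * N s 1 : ℝ) : ℂ)) s :=
    ((hN s 1).ofReal_comp).add ((hB s 1).ofReal_comp.const_mul Complex.I)
  have L2 : HasDerivAt (fun t => ((N t 2 : ℂ) + Complex.I * (B t 2 : ℂ)))
      (((-(κ s) * T s 2 + τ s * B s 2 : ℝ) : ℂ) + Complex.I * ((-(τ s) * N s 2 : ℝ) : ℂ)) s :=
    ((hN s 2).ofReal_comp).add ((hB s 2).ofReal_comp.const_mul Complex.I)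
  have hfe0 : (fun t => ((N t 0 : ℂ) + Complex.I * (B t 0 : ℂ)))
      = fun t => ψ t 0 * ψ t 0 - ψ t 1 * ψ t 1 := funext fun t => by
    rw [hNB t 0]
    simp [spinorBilin, sigma1, dotProduct, mulVec, Fin.sum_univ_two]
    ring
  have hfe1 : (fun t => ((N t 1 : ℂ) + Complex.I * (B t 1 : ℂ)))
      = fun t => Complex.I * (ψ t 0 * ψ t 0 + ψ t 1 * ψ t 1) := funext fun t => by
    rw [hNB t 1]
    simp [spinorBilin, sigma2, dotProduct, mulVec, Fin.sum_univ_two]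
    ring
  have hfe2 : (fun t => ((N t 2 : ℂ) + Complex.I * (B t 2 : ℂ)))
      = fun t => -(ψ t 0 * ψ t 1 + ψ t 1 * ψ t 0) := funext fun t => by
    rw [hNB t 2]
    simp [spinorBilin, sigma3, dotProduct, mulVec, Fin.sum_univ_two]
    ring
  have R0 : HasDerivAt (fun t => ψ t 0 * ψ t 0 - ψ t 1 * ψ t 1)
      (D0 * (ψ s 0) + (ψ s 0) * D0 - (D1 * (ψ s 1) + (ψ s 1) * D1)) s := (h0.mul h0).sub (h1.mul h1)
  have R1 : HasDerivAt (fun t => Complex.I * (ψ t 0 * ψ t 0 + ψ t 1 * ψ t 1))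
      (Complex.I * (D0 * (ψ s 0) + (ψ s 0) * D0 + (D1 * (ψ s 1) + (ψ s 1) * D1))) s :=
    ((h0.mul h0).add (h1.mul h1)).const_mul Complex.I
  have R2 : HasDerivAt (fun t => -(ψ t 0 * ψ t 1 + ψ t 1 * ψ t 0))
      (-(D0 * (ψ s 1) + (ψ s 0) * D1 + (D1 * (ψ s 0) + (ψ s 1) * D0))) s := ((h0.mul h1).add (h1.mul h0)).neg
  have E0 := (hfe0 ▸ L0).unique R0
  have E1 := (hfe1 ▸ L1).unique R1
  have E2 := (hfe2 ▸ L2).unique R2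
  push_cast at E0 E1 E2
  -- cleaned equations
  have F0 : -(κ s : ℂ) * ((starRingEnd ℂ) (ψ s 1) * (ψ s 0) + (starRingEnd ℂ) (ψ s 0) * (ψ s 1))
      - Complex.I * (τ s : ℂ) * ((ψ s 0) * (ψ s 0) - (ψ s 1) * (ψ s 1))
      = D0 * (ψ s 0) + (ψ s 0) * D0 - (D1 * (ψ s 1) + (ψ s 1) * D1) := by
    linear_combination E0 + Complex.I * (τ s : ℂ) * hn0 + (κ s : ℂ) * hT0 - (τ s : ℂ) * (B s 0 : ℂ) * hI2
  have F1 : -(κ s : ℂ) * (Complex.I * ((starRingEnd ℂ) (ψ s 1) * (ψ s 0) - (starRingEnd ℂ) (ψ s 0) * (ψ s 1)))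
      - Complex.I * (τ s : ℂ) * (Complex.I * ((ψ s 0) * (ψ s 0) + (ψ s 1) * (ψ s 1)))
      = Complex.I * (D0 * (ψ s 0) + (ψ s 0) * D0 + (D1 * (ψ s 1) + (ψ s 1) * D1)) := by
    linear_combination E1 + Complex.I * (τ s : ℂ) * hn1 + (κ s : ℂ) * hT1 - (τ s : ℂ) * (B s 1 : ℂ) * hI2
  have F2 : -(κ s : ℂ) * ((starRingEnd ℂ) (ψ s 0) * (ψ s 0) - (starRingEnd ℂ) (ψ s 1) * (ψ s 1))
      - Complex.I * (τ s : ℂ) * (-((ψ s 0) * (ψ s 1) + (ψ s 1) * (ψ s 0)))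
      = -(D0 * (ψ s 1) + (ψ s 0) * D1 + (D1 * (ψ s 0) + (ψ s 1) * D0)) := by
    linear_combination E2 + Complex.I * (τ s : ℂ) * hn2 + (κ s : ℂ) * hT2 - (τ s : ℂ) * (B s 2 : ℂ) * hI2
  have hP : (ψ s 0) * (D0 - (1/2) * (-Complex.I * (τ s : ℂ) * (ψ s 0)
      + (κ s : ℂ) * (-(starRingEnd ℂ) (ψ s 1)))) = 0 := by
    linear_combination (-(1:ℂ)/4) * F0 + (Complex.I/4) * F1
      + (D0 * (ψ s 0) + (ψ s 0) * D0 + (D1 * (ψ s 1) + (ψ s 1) * D1)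
        + (κ s : ℂ) * ((starRingEnd ℂ) (ψ s 1) * (ψ s 0) - (starRingEnd ℂ) (ψ s 0) * (ψ s 1))) / 4 * hI2
      + Complex.I * (τ s : ℂ) * (ψ s 0 * ψ s 0 + ψ s 1 * ψ s 1) / 4 * hI2
  have hQ : (ψ s 1) * (D1 - (1/2) * (-Complex.I * (τ s : ℂ) * (ψ s 1)
      + (κ s : ℂ) * ((starRingEnd ℂ) (ψ s 0)))) = 0 := by
    linear_combination ((1:ℂ)/4) * F0 + (Complex.I/4) * F1
      + (D0 * (ψ s 0) + (ψ s 0) * D0 + (D1 * (ψ s 1) + (ψ s 1) * D1)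
        + (κ s : ℂ) * ((starRingEnd ℂ) (ψ s 1) * (ψ s 0) - (starRingEnd ℂ) (ψ s 0) * (ψ s 1))) / 4 * hI2
      + Complex.I * (τ s : ℂ) * (ψ s 0 * ψ s 0 + ψ s 1 * ψ s 1) / 4 * hI2
  have hR : (ψ s 1) * (D0 - (1/2) * (-Complex.I * (τ s : ℂ) * (ψ s 0)
        + (κ s : ℂ) * (-(starRingEnd ℂ) (ψ s 1))))
      + (ψ s 0) * (D1 - (1/2) * (-Complex.I * (τ s : ℂ) * (ψ s 1)
        + (κ s : ℂ) * ((starRingEnd ℂ) (ψ s 0)))) = 0 := by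
    linear_combination ((1:ℂ)/2) * F2
  have h1X : (ψ s 1) * (D0 - (1/2) * (-Complex.I * (τ s : ℂ) * (ψ s 0)
      + (κ s : ℂ) * (-(starRingEnd ℂ) (ψ s 1)))) = 0 := by
    have h2 : (ψ s 1) * ((ψ s 1) * (D0 - (1/2) * (-Complex.I * (τ s : ℂ) * (ψ s 0)
        + (κ s : ℂ) * (-(starRingEnd ℂ) (ψ s 1))))) = 0 := by
      linear_combination (ψ s 1) * hR - (ψ s 0) * hQ
    rcases mul_eq_zero.1 h2 with h | h
    · rw [h]; ring
    · exact h
  have h0Y : (ψ s 0) * (D1 - (1/2) * (-Complex.I * (τ s : ℂ) * (ψ s 1)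
      + (κ s : ℂ) * ((starRingEnd ℂ) (ψ s 0)))) = 0 := by
    have h2 : (ψ s 0) * ((ψ s 0) * (D1 - (1/2) * (-Complex.I * (τ s : ℂ) * (ψ s 1)
        + (κ s : ℂ) * ((starRingEnd ℂ) (ψ s 0))))) = 0 := by
      linear_combination (ψ s 0) * hR - (ψ s 1) * hP
    rcases mul_eq_zero.1 h2 with h | h
    · rw [h]; ring
    · exact h
  have hX : D0 = (1/2) * (-Complex.I * (τ s : ℂ) * (ψ s 0)
      + (κ s : ℂ) * (-(starRingEnd ℂ) (ψ s 1))) := by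
    linear_combination (starRingEnd ℂ) (ψ s 0) * hP + (starRingEnd ℂ) (ψ s 1) * h1X
      - (D0 - (1/2) * (-Complex.I * (τ s : ℂ) * (ψ s 0)
        + (κ s : ℂ) * (-(starRingEnd ℂ) (ψ s 1)))) * (hψunit s)
  have hY : D1 = (1/2) * (-Complex.I * (τ s : ℂ) * (ψ s 1)
      + (κ s : ℂ) * ((starRingEnd ℂ) (ψ s 0))) := by
    linear_combination (starRingEnd ℂ) (ψ s 1) * hQ + (starRingEnd ℂ) (ψ s 0) * h0Y
      - (D1 - (1/2) * (-Complex.I * (τ s : ℂ) * (ψ s 1)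
        + (κ s : ℂ) * ((starRingEnd ℂ) (ψ s 0)))) * (hψunit s)
  fin_cases k
  · have : (1 / 2 : ℂ) * (-Complex.I * (τ s : ℂ) * ψ s 0 + (κ s : ℂ) * mate (ψ s) 0) = D0 := by
      simp only [mate, Matrix.cons_val_zero]
      linear_combination -hX
    exact this ▸ h0
  · have : (1 / 2 : ℂ) * (-Complex.I * (τ s : ℂ) * ψ s 1 + (κ s : ℂ) * mate (ψ s) 1) = D1 := by
      simp only [mate, Matrix.cons_val_one, Matrix.head_cons, Matrix.cons_val_zero]
      linear_combination -hY
    exact this ▸ h1
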